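/- arXiv:2502.11556 — 3 statements merged into one kernel-verified Lean document; each statement's English description precedes it below -/
import Mathlib

section
/- Let A ∈ ℝ^{n×n}, B ∈ ℝ^{n×m}, R ∈ ℝ^{m×m} symmetric positive-definite, X ∈ ℝ^{n×n} symmetric positive-definite, and Y ∈ ℝ^{n×n}. If XAᵀ + AX − YᵀBR⁻¹Bᵀ − BR⁻¹BᵀY ≺ 0, then the matrix A − BR⁻¹BᵀP, with P = YX⁻¹, is Hurwitz (all its eigenvalues have negative real part). -/
open Matrix

private lemma re_dot_pos {k : ℕ} {N : Matrix (Fin k) (Fin k) ℝ} (hN : N.PosDef)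
    {w : Fin k → ℂ} (hw : w ≠ 0) :
    0 < (star w ⬝ᵥ ((N.map (algebraMap ℝ ℂ)) *ᵥ w)).re := by
  set a : Fin k → ℝ := fun i => (w i).re with ha
  set b : Fin k → ℝ := fun i => (w i).im with hb
  have key : (star w ⬝ᵥ ((N.map (algebraMap ℝ ℂ)) *ᵥ w)).re
      = a ⬝ᵥ (N *ᵥ a) + b ⬝ᵥ (N *ᵥ b) := by
    simp only [dotProduct, mulVec, Pi.star_apply, map_apply, Finset.mul_sum,
      ← Finset.sum_add_distrib, Complex.re_sum]
    refine Finset.sum_congr rfl fun i _ => ?_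
    refine Finset.sum_congr rfl fun j _ => ?_
    simp [Complex.mul_re, Complex.mul_im, RCLike.star_def, ha, hb]
  rw [key]
  rcases (not_and_or.mp (fun h : a = 0 ∧ b = 0 => hw (funext fun i =>
      Complex.ext (congrFun h.1 i) (congrFun h.2 i)))) with h | h
  · have h2 : 0 ≤ b ⬝ᵥ (N *ᵥ b) := by
      by_cases hb0 : b = 0
      · simp [hb0]
      · exact le_of_lt (by simpa using hN.dotProduct_mulVec_pos hb0)
    exact add_pos_of_pos_of_nonneg (by simpa using hN.dotProduct_mulVec_pos h) h2
  · have h2 : 0 ≤ a ⬝ᵥ (N *ᵥ a) := by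
      by_cases ha0 : a = 0
      · simp [ha0]
      · exact le_of_lt (by simpa using hN.dotProduct_mulVec_pos ha0)
    exact add_pos_of_nonneg_of_pos h2 (by simpa using hN.dotProduct_mulVec_pos h)


set_option maxHeartbeats 1000000 in
/-- Stabilisation of LTI systems: if `X ≻ 0`, `R ≻ 0` and
`X Aᵀ + A X - Yᵀ B R⁻¹ Bᵀ - B R⁻¹ Bᵀ Y ≺ 0`, then `A - B R⁻¹ Bᵀ P` with `P = Y X⁻¹`
is Hurwitz. -/
theorem stabilisation_hurwitz {n m : ℕ} (A : Matrix (Fin n) (Fin n) ℝ)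
    (B : Matrix (Fin n) (Fin m) ℝ) (R : Matrix (Fin m) (Fin m) ℝ)
    (X Y : Matrix (Fin n) (Fin n) ℝ)
    (hR : R.PosDef) (hX : X.PosDef)
    (hLMI : (-(X * Aᵀ + A * X - Yᵀ * B * R⁻¹ * Bᵀ - B * R⁻¹ * Bᵀ * Y)).PosDef) :
    ∀ μ ∈ spectrum ℂ ((A - B * R⁻¹ * Bᵀ * (Y * X⁻¹)).map (algebraMap ℝ ℂ)),
      μ.re < 0 := by
  intro μ hμ
  set M : Matrix (Fin n) (Fin n) ℝ := A - B * R⁻¹ * Bᵀ * (Y * X⁻¹) with hM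
  set N : Matrix (Fin n) (Fin n) ℝ :=
    -(X * Aᵀ + A * X - Yᵀ * B * R⁻¹ * Bᵀ - B * R⁻¹ * Bᵀ * Y) with hNdef
  -- symmetry facts
  have hXs : Xᵀ = X := hX.1
  have hRs : Rᵀ = R := hR.1
  have hXdet : IsUnit X.det := isUnit_iff_ne_zero.mpr hX.det_pos.ne'
  have hXinv : X⁻¹ * X = 1 := nonsing_inv_mul X hXdet
  have hXinv' : X * X⁻¹ = 1 := mul_nonsing_inv X hXdet
  have hRinvs : (R⁻¹)ᵀ = R⁻¹ := by rw [transpose_nonsing_inv, hRs]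
  have hXinvs : (X⁻¹)ᵀ = X⁻¹ := by rw [transpose_nonsing_inv, hXs]
  -- key algebraic identity
  have hkey : N = -(M * X + X * Mᵀ) := by
    rw [hNdef, hM]
    have h1 : (A - B * R⁻¹ * Bᵀ * (Y * X⁻¹)) * X = A * X - B * R⁻¹ * Bᵀ * Y := by
      rw [sub_mul]
      congr 1
      rw [Matrix.mul_assoc (B * R⁻¹ * Bᵀ), Matrix.mul_assoc Y, hXinv, Matrix.mul_one]
    have h2 : X * (A - B * R⁻¹ * Bᵀ * (Y * X⁻¹))ᵀ = X * Aᵀ - Yᵀ * B * R⁻¹ * Bᵀ := by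
      have ht : (B * R⁻¹ * Bᵀ * (Y * X⁻¹))ᵀ = X⁻¹ * (Yᵀ * (B * (R⁻¹ * Bᵀ))) := by
        simp [transpose_mul, hRinvs, hXinvs, Matrix.mul_assoc]
      rw [transpose_sub, Matrix.mul_sub, ht, ← Matrix.mul_assoc, hXinv', Matrix.one_mul]
      simp [Matrix.mul_assoc]
    rw [h1, h2]
    abel
  -- complexification
  let f := algebraMap ℝ ℂ
  set Mc := M.map f with hMc
  set Xc := X.map f with hXc
  set Nc := N.map f with hNc
  have hmapmul : ∀ (P Q : Matrix (Fin n) (Fin n) ℝ), (P * Q).map f = P.map f * Q.map f :=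
    fun P Q => Matrix.map_mul
  -- eigenvector of Mcᴴ for conj μ
  have hdet : (μ • 1 - Mc).det = 0 := by
    have h := spectrum.mem_iff.mp hμ
    rw [Algebra.algebraMap_eq_smul_one] at h
    by_contra hne
    exact h ((Matrix.isUnit_iff_isUnit_det _).mpr (isUnit_iff_ne_zero.mpr hne))
  have hdet2 : ((starRingEnd ℂ) μ • 1 - Mcᴴ).det = 0 := by
    have : ((μ • 1 - Mc)ᴴ).det = 0 := by
      rw [Matrix.det_conjTranspose, hdet, star_zero]
    simpa [conjTranspose_sub, conjTranspose_smul] using this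
  obtain ⟨w, hw0, hww⟩ := (Matrix.exists_mulVec_eq_zero_iff).mpr hdet2
  have hwe : Mcᴴ *ᵥ w = (starRingEnd ℂ) μ • w := by
    have := hww
    rw [sub_mulVec, smul_mulVec, one_mulVec, sub_eq_zero] at this
    exact this.symm
  -- Mcᴴ = Mᵀ complexified
  have hMcH : Mcᴴ = (Mᵀ).map f := by
    rw [hMc]
    ext i j
    simp [conjTranspose_apply, map_apply, f, Complex.conj_ofReal]
  -- vecMul fact
  have hvm : star w ᵥ* Mc = μ • star w := by
    have := congrArg star hwe
    rw [star_mulVec, conjTranspose_conjTranspose, star_smul] at this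
    simpa using this
  set c : ℂ := star w ⬝ᵥ (Xc *ᵥ w) with hc
  have hcpos : 0 < c.re := re_dot_pos hX hw0
  have hNpos : 0 < (star w ⬝ᵥ (Nc *ᵥ w)).re := re_dot_pos hLMI hw0
  have hquad : star w ⬝ᵥ (Nc *ᵥ w) = -(μ * c + (starRingEnd ℂ) μ * c) := by
    rw [hNc, hkey]
    have : (-(M * X + X * Mᵀ)).map f = -(Mc * Xc + Xc * Mcᴴ) := by
      rw [hMcH, ← hmapmul, ← hmapmul]
      ext i j
      simp [map_apply, f]
    rw [this]
    rw [neg_mulVec, dotProduct_neg, add_mulVec, dotProduct_add]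
    congr 1
    congr 1
    · rw [← mulVec_mulVec, dotProduct_mulVec, hvm, smul_dotProduct, smul_eq_mul, ← hc]
    · rw [← mulVec_mulVec, hwe, mulVec_smul, dotProduct_smul, smul_eq_mul, ← hc]
  rw [hquad] at hNpos
  have : (-(μ * c + (starRingEnd ℂ) μ * c)).re = -(2 * μ.re * c.re) := by
    simp [Complex.add_re, Complex.mul_re, Complex.conj_re, Complex.conj_im]
    ring
  rw [this] at hNpos
  nlinarith
end

section
/- Let A ∈ ℝ^{n×n}, B ∈ ℝ^{n×m}, R symmetric positive-definite, Q symmetric positive-semidefinite, W symmetric positive-definite, and P, P̲, Z ∈ ℝ^{n×n} with Z symmetric. Suppose Z satisfies AᵀZ + ZA + Q − PᵀBR⁻¹BᵀZ − ZBR⁻¹BᵀP + PᵀBR⁻¹BᵀP = 0 and that Aᵀ(P̲ − P) + (P̲ − P)ᵀA − Q + W − P̲ᵀBR⁻¹BᵀP̲ ≻ 0. Then (A − BR⁻¹BᵀP)ᵀ(P − P̲ − Z) + (P − P̲ − Z)ᵀ(A − BR⁻¹BᵀP) − W ≺ 0. -/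
open Matrix

/-- Key algebraic step of Theorem 3: from the `Z`-equation and the strict matrix inequality
in `P̲`, derive the closed-loop Lyapunov-like inequality for `P - P̲ - Z`. -/
theorem key_algebraic_step {n m : ℕ} (A : Matrix (Fin n) (Fin n) ℝ)
    (B : Matrix (Fin n) (Fin m) ℝ) (R : Matrix (Fin m) (Fin m) ℝ)
    (Q W P Pu Z : Matrix (Fin n) (Fin n) ℝ)
    (hR : R.PosDef) (hQ : Q.PosSemidef) (hW : W.PosDef) (hZsymm : Z.IsSymm)
    (hZeq : Aᵀ * Z + Z * A + Q - Pᵀ * B * R⁻¹ * Bᵀ * Z - Z * B * R⁻¹ * Bᵀ * P +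
      Pᵀ * B * R⁻¹ * Bᵀ * P = 0)
    (hIneq : (Aᵀ * (Pu - P) + (Pu - P)ᵀ * A - Q + W - Puᵀ * B * R⁻¹ * Bᵀ * Pu).PosDef) :
    (-((A - B * R⁻¹ * Bᵀ * P)ᵀ * (P - Pu - Z) + (P - Pu - Z)ᵀ * (A - B * R⁻¹ * Bᵀ * P)
        - W)).PosDef := by
  have hZt : Zᵀ = Z := hZsymm
  have hRt : Rᵀ = R := hR.isHermitian
  have hRinvT : (R⁻¹)ᵀ = R⁻¹ := by rw [Matrix.transpose_nonsing_inv, hRt]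
  have hRinvPSD : (R⁻¹).PosSemidef := hR.inv.posSemidef
  have hSPSD : (B * R⁻¹ * Bᵀ).PosSemidef := by
    have := hRinvPSD.mul_mul_conjTranspose_same B
    simpa [Matrix.conjTranspose_eq_transpose_of_trivial, Matrix.mul_assoc] using this
  have hKPSD : ((P - Pu)ᵀ * (B * R⁻¹ * Bᵀ) * (P - Pu)).PosSemidef := by
    have := hSPSD.conjTranspose_mul_mul_same (P - Pu)
    simpa [Matrix.conjTranspose_eq_transpose_of_trivial] using this
  have key : -((A - B * R⁻¹ * Bᵀ * P)ᵀ * (P - Pu - Z) + (P - Pu - Z)ᵀ * (A - B * R⁻¹ * Bᵀ * P)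
        - W)
      = (Aᵀ * (Pu - P) + (Pu - P)ᵀ * A - Q + W - Puᵀ * B * R⁻¹ * Bᵀ * Pu)
        + (P - Pu)ᵀ * (B * R⁻¹ * Bᵀ) * (P - Pu)
        + (Aᵀ * Z + Z * A + Q - Pᵀ * B * R⁻¹ * Bᵀ * Z - Z * B * R⁻¹ * Bᵀ * P +
          Pᵀ * B * R⁻¹ * Bᵀ * P) := by
    simp only [Matrix.transpose_sub, Matrix.transpose_mul, Matrix.transpose_transpose,
      hZt, hRinvT]
    noncomm_ring
    simp only [Matrix.mul_assoc]
    abel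
  rw [key, hZeq, add_zero]
  exact hIneq.add_posSemidef hKPSD
end

section
/- Let M ∈ ℝ^{n×n} be symmetric negative-definite, W symmetric positive-definite, Z symmetric positive-semidefinite, and P, P̲, P̂ ∈ ℝ^{n×n} such that Mᵀ(P − P̲ − Z) + (P − P̲ − Z)ᵀM − W ≺ 0 and M P̂ + P̂ᵀ M + W = 0. Then x₀ᵀ Z x₀ < trace(P − P̲ + P̂) · x₀ᵀ x₀ for every nonzero x₀ ∈ ℝⁿ. -/
open Matrix

section Aux

variable {n : ℕ}

private lemma star_eq (x : Fin n → ℝ) : star x = x := by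
  funext i; simp

private lemma herm_iff_symm (A : Matrix (Fin n) (Fin n) ℝ) :
    A.IsHermitian ↔ Aᵀ = A := by
  rw [Matrix.IsHermitian, Matrix.conjTranspose_eq_transpose_of_trivial]

private lemma exists_symm_sqrt {A : Matrix (Fin n) (Fin n) ℝ} (hA : A.PosSemidef) :
    ∃ S : Matrix (Fin n) (Fin n) ℝ, Sᵀ = S ∧ S * S = A := by
  open scoped MatrixOrder in
  exact ⟨CFC.sqrt A, (herm_iff_symm _).mp (CFC.sqrt_nonneg A).posSemidef.isHermitian,
    CFC.sqrt_mul_sqrt_self A hA.nonneg⟩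

/-- trace of a product of real PSD matrices is nonnegative. -/
private lemma trace_mul_psd_nonneg {A B : Matrix (Fin n) (Fin n) ℝ}
    (hA : A.PosSemidef) (hB : B.PosSemidef) : 0 ≤ (A * B).trace := by
  obtain ⟨Sa, hSa, hAe⟩ : ∃ Sa : Matrix (Fin n) (Fin n) ℝ, Saᵀ = Sa ∧ Sa * Sa = A :=
    exists_symm_sqrt hA
  obtain ⟨Sb, hSb, hBe⟩ : ∃ Sb : Matrix (Fin n) (Fin n) ℝ, Sbᵀ = Sb ∧ Sb * Sb = B :=
    exists_symm_sqrt hB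
  have key : (A * B).trace = ((Sa * Sb)ᵀ * (Sa * Sb)).trace := by
    calc (A * B).trace = ((Sa * Sa * Sb) * Sb).trace := by
          rw [← hAe, ← hBe]; congr 1; simp only [Matrix.mul_assoc]
      _ = (Sb * (Sa * Sa * Sb)).trace := Matrix.trace_mul_comm _ _
      _ = ((Sa * Sb)ᵀ * (Sa * Sb)).trace := by
          rw [Matrix.transpose_mul, hSa, hSb]; congr 1; simp only [Matrix.mul_assoc]
  rw [key, Matrix.trace]
  apply Finset.sum_nonneg
  intro i _
  rw [Matrix.diag_apply, Matrix.mul_apply]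
  apply Finset.sum_nonneg
  intro j _
  rw [Matrix.transpose_apply]
  exact mul_self_nonneg _

/-- The Cauchy-Schwarz matrix `(x⬝x)•1 - x xᵀ` is PSD. -/
private lemma cauchy_psd (x : Fin n → ℝ) :
    (((x ⬝ᵥ x) • (1 : Matrix (Fin n) (Fin n) ℝ)) - vecMulVec x x).PosSemidef := by
  refine Matrix.PosSemidef.of_dotProduct_mulVec_nonneg ?_ ?_
  · rw [herm_iff_symm, Matrix.transpose_sub, Matrix.transpose_smul,
      Matrix.transpose_one]
    congr 1
    funext i j
    simp [vecMulVec_apply, mul_comm]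
  · intro y
    rw [star_eq]
    have hmv : (vecMulVec x x) *ᵥ y = (x ⬝ᵥ y) • x := by
      funext i
      simp [Matrix.mulVec, vecMulVec_apply, dotProduct, Finset.mul_sum,
        Finset.sum_mul, mul_assoc, mul_comm, mul_left_comm]
    rw [Matrix.sub_mulVec, dotProduct_sub, hmv, Matrix.smul_mulVec,
      Matrix.one_mulVec, dotProduct_smul, dotProduct_smul]
    have hcs : (x ⬝ᵥ y) * (x ⬝ᵥ y) ≤ (x ⬝ᵥ x) * (y ⬝ᵥ y) := by
      have := Finset.sum_mul_sq_le_sq_mul_sq Finset.univ x y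
      simpa [dotProduct, sq, mul_comm] using this
    have hyx : y ⬝ᵥ x = x ⬝ᵥ y := dotProduct_comm y x
    simp only [smul_eq_mul, hyx]
    nlinarith [hcs]

/-- quadratic form bounded by trace times norm squared, for PSD matrices. -/
private lemma quad_le_trace_mul {Z : Matrix (Fin n) (Fin n) ℝ} (hZ : Z.PosSemidef)
    (x : Fin n → ℝ) : x ⬝ᵥ (Z *ᵥ x) ≤ Z.trace * (x ⬝ᵥ x) := by
  have h := trace_mul_psd_nonneg hZ (cauchy_psd x)
  have hexp : (Z * (((x ⬝ᵥ x) • (1 : Matrix (Fin n) (Fin n) ℝ)) - vecMulVec x x)).trace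
      = Z.trace * (x ⬝ᵥ x) - x ⬝ᵥ (Z *ᵥ x) := by
    rw [Matrix.mul_sub, Matrix.trace_sub]
    congr 1
    · rw [Matrix.mul_smul, Matrix.mul_one, Matrix.trace_smul]
      simp [mul_comm]
    · simp only [Matrix.trace, Matrix.diag, Matrix.mul_apply, vecMulVec_apply,
        dotProduct, Matrix.mulVec]
      congr 1; funext i
      rw [Finset.mul_sum]
      congr 1; funext j
      ring
  rw [hexp] at h
  linarith

private lemma trace_pos_of_posDef [NeZero n] {U : Matrix (Fin n) (Fin n) ℝ}
    (hU : U.PosDef) : 0 < U.trace := by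
  rw [Matrix.trace]
  apply Finset.sum_pos
  · intro i _
    have h := hU.dotProduct_mulVec_pos (x := Pi.single i 1) (by
      intro h
      have := congrFun h i
      simp at this)
    rw [star_eq] at h
    simpa [Matrix.mulVec_single, Matrix.diag] using h
  · exact Finset.univ_nonempty

/-- Asymmetric Lyapunov trace lemma. -/
private lemma lyap_trace [NeZero n] {Q T : Matrix (Fin n) (Fin n) ℝ}
    (hQ : Q.PosDef) (hS : (Q * T + Tᵀ * Q).PosDef) : 0 < T.trace := by
  obtain ⟨R, hRsymm, hRR⟩ : ∃ R : Matrix (Fin n) (Fin n) ℝ, Rᵀ = R ∧ R * R = Q :=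
    exists_symm_sqrt hQ.posSemidef
  have hdetQ : 0 < Q.det := hQ.det_pos
  have hdetR : R.det ≠ 0 := by
    intro h
    rw [← hRR, Matrix.det_mul, h, mul_zero] at hdetQ
    exact lt_irrefl _ hdetQ
  haveI : Invertible R := R.invertibleOfIsUnitDet (isUnit_iff_ne_zero.mpr hdetR)
  have hRinv_symm : (R⁻¹)ᵀ = R⁻¹ := by
    rw [Matrix.transpose_nonsing_inv, hRsymm]
  set S := Q * T + Tᵀ * Q with hSdef
  have hU : (R⁻¹ * S * R⁻¹).PosDef := by
    refine Matrix.PosDef.of_dotProduct_mulVec_pos ?_ ?_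
    · have hSsymm : Sᵀ = S := (herm_iff_symm S).mp hS.isHermitian
      rw [herm_iff_symm, Matrix.transpose_mul, Matrix.transpose_mul,
        hRinv_symm, hSsymm, Matrix.mul_assoc]
    · intro x hx
      rw [star_eq]
      set y := R⁻¹ *ᵥ x with hy
      have hy0 : y ≠ 0 := by
        intro h
        apply hx
        have h2 : R *ᵥ y = R *ᵥ 0 := by rw [h]
        rw [hy, Matrix.mulVec_mulVec, Matrix.mul_inv_of_invertible] at h2
        simpa using h2
      have hquad := hS.dotProduct_mulVec_pos hy0
      rw [star_eq] at hquad
      have heq : x ⬝ᵥ ((R⁻¹ * S * R⁻¹) *ᵥ x) = y ⬝ᵥ (S *ᵥ y) := by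
        rw [Matrix.mul_assoc, ← Matrix.mulVec_mulVec, ← Matrix.mulVec_mulVec,
          Matrix.dotProduct_mulVec, ← Matrix.mulVec_transpose, hRinv_symm]
      rw [heq]
      exact hquad
  have htr := trace_pos_of_posDef hU
  have hexp : (R⁻¹ * S * R⁻¹).trace = 2 * T.trace := by
    have h1 : R⁻¹ * Q = R := by
      rw [← hRR, ← Matrix.mul_assoc, Matrix.inv_mul_of_invertible, Matrix.one_mul]
    have h2 : Q * R⁻¹ = R := by
      rw [← hRR, Matrix.mul_assoc, Matrix.mul_inv_of_invertible, Matrix.mul_one]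
    rw [hSdef, Matrix.mul_add, Matrix.add_mul, Matrix.trace_add]
    have e1 : R⁻¹ * (Q * T) * R⁻¹ = R * T * R⁻¹ := by
      rw [← Matrix.mul_assoc, h1]
    have e2 : R⁻¹ * (Tᵀ * Q) * R⁻¹ = R⁻¹ * Tᵀ * R := by
      rw [Matrix.mul_assoc, Matrix.mul_assoc, h2, ← Matrix.mul_assoc]
    rw [e1, e2]
    have t1 : (R * T * R⁻¹).trace = T.trace := by
      rw [Matrix.trace_mul_comm, ← Matrix.mul_assoc, Matrix.inv_mul_of_invertible,
        Matrix.one_mul]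
    have t2 : (R⁻¹ * Tᵀ * R).trace = T.trace := by
      rw [Matrix.trace_mul_comm, ← Matrix.mul_assoc, Matrix.mul_inv_of_invertible,
        Matrix.one_mul, Matrix.trace_transpose]
    rw [t1, t2]; ring
  rw [hexp] at htr
  linarith

end Aux

/-- Suboptimality bound: for symmetric negative-definite `M`, positive-definite `W`,
positive-semidefinite `Z`, if `Mᵀ(P - P̲ - Z) + (P - P̲ - Z)ᵀ M - W ≺ 0` and
`M P̂ + P̂ᵀ M + W = 0`, then `x₀ᵀ Z x₀ < trace(P - P̲ + P̂) · x₀ᵀ x₀` for all nonzero `x₀`. -/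
theorem suboptimality_bound {n : ℕ} (M W Z P Pu Ph : Matrix (Fin n) (Fin n) ℝ)
    (hMsymm : M.IsSymm) (hMneg : (-M).PosDef) (hW : W.PosDef) (hZ : Z.PosSemidef)
    (hIneq : (-(Mᵀ * (P - Pu - Z) + (P - Pu - Z)ᵀ * M - W)).PosDef)
    (hPh : M * Ph + Phᵀ * M + W = 0) :
    ∀ x₀ : Fin n → ℝ, x₀ ≠ 0 →
      x₀ ⬝ᵥ (Z *ᵥ x₀) < (P - Pu + Ph).trace * (x₀ ⬝ᵥ x₀) := by
  intro x₀ hx₀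
  haveI : NeZero n := ⟨fun h => hx₀ (by subst h; funext i; exact i.elim0)⟩
  set Y := P - Pu - Z with hY
  set T := Y + Ph with hT
  have hMT : Mᵀ = M := hMsymm
  have hWeq : W = -(M * Ph + Phᵀ * M) := by
    rw [eq_neg_iff_add_eq_zero, add_comm]
    exact hPh
  have hkey : (-M) * T + Tᵀ * (-M) = -(Mᵀ * Y + Yᵀ * M - W) := by
    rw [hMT, hWeq, hT, Matrix.transpose_add]
    noncomm_ring
  have hS : ((-M) * T + Tᵀ * (-M)).PosDef := by
    rw [hkey]; exact hIneq
  have htrT : 0 < T.trace := lyap_trace hMneg hS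
  have hdec : (P - Pu + Ph).trace = T.trace + Z.trace := by
    have he : P - Pu + Ph = T + Z := by rw [hT, hY]; abel
    rw [he, Matrix.trace_add]
  have hquad : x₀ ⬝ᵥ (Z *ᵥ x₀) ≤ Z.trace * (x₀ ⬝ᵥ x₀) := quad_le_trace_mul hZ x₀
  have hxx : 0 < x₀ ⬝ᵥ x₀ := by
    have h1 := (Matrix.PosDef.one (n := Fin n) (R := ℝ)).dotProduct_mulVec_pos hx₀
    simpa [star_eq, Matrix.one_mulVec] using h1
  rw [hdec]
  nlinarith
end
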